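/- Let k ≥ 1, s a positive integer coprime to all primes ≤ k, and suppose the set X_{n,k,s} = {x ∈ {1,...,n} : β_*(x) = s} has at least r elements where r ≤ k. Then the r smallest elements of X_{n,k,s} are exactly s, 2s, 3s, ..., rs, and any two of them are adjacent in G_{n,k} (i.e., they form a clique). -/

import Mathlib

/-- `betaStar k x` is the largest divisor of `x` coprime to all primes `≤ k`. -/
def betaStar (k x : ℕ) : ℕ :=
  ∏ p ∈ x.primeFactors.filter (fun p => k < p), p ^ x.factorization p

/-- The graph on `{1, …, n}` where `x ~ y` iff `x ≠ y` and `a*x = b*y`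
for some `a, b ∈ {1, …, k}`. -/
def GMult (n k : ℕ) : SimpleGraph ℕ where
  Adj x y := x ≠ y ∧ x ∈ Finset.Icc 1 n ∧ y ∈ Finset.Icc 1 n ∧
    ∃ a b : ℕ, 1 ≤ a ∧ a ≤ k ∧ 1 ≤ b ∧ b ≤ k ∧ a * x = b * y
  symm := ⟨fun _ _ ⟨hxy, hx, hy, a, b, ha1, hak, hb1, hbk, hab⟩ =>
    ⟨hxy.symm, hy, hx, b, a, hb1, hbk, ha1, hak, hab.symm⟩⟩
  loopless := ⟨fun _ ⟨hxx, _⟩ => hxx rfl⟩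

lemma prod_pf (x : ℕ) (hx : x ≠ 0) :
    ∏ p ∈ x.primeFactors, p ^ x.factorization p = x := by
  rw [← Nat.prod_factorization_eq_prod_primeFactors]
  exact Nat.factorization_prod_pow_eq_self hx

lemma exists_decomp (k x : ℕ) (hx : x ≠ 0) :
    ∃ c, x = c * betaStar k x ∧ ∀ p : ℕ, p.Prime → p ∣ c → p ≤ k := by
  refine ⟨∏ p ∈ x.primeFactors.filter (fun p => ¬ k < p), p ^ x.factorization p, ?_, ?_⟩
  · rw [betaStar, mul_comm, Finset.prod_filter_mul_prod_filter_not, prod_pf x hx]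
  · intro p hp hpc
    rcases (Prime.dvd_finset_prod_iff hp.prime _).mp hpc with ⟨q, hq, hpq⟩
    have hq' := Finset.mem_filter.mp hq
    have : p = q := ((Nat.prime_dvd_prime_iff_eq hp
      (Nat.prime_of_mem_primeFactors hq'.1)).mp (hp.dvd_of_dvd_pow hpq))
    omega

lemma betaStar_eq_of (k m s : ℕ) (hm : m ≠ 0) (hs : s ≠ 0)
    (hmk : ∀ p : ℕ, p.Prime → p ∣ m → p ≤ k)
    (hsk : ∀ p : ℕ, p.Prime → p ∣ s → k < p) : betaStar k (m * s) = s := by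
  have hms : m * s ≠ 0 := mul_ne_zero hm hs
  have hfilter : Finset.filter (fun p => k < p) (m * s).primeFactors = s.primeFactors := by
    ext p
    rw [Finset.mem_filter, Nat.primeFactors_mul hm hs, Finset.mem_union]
    constructor
    · rintro ⟨h | h, hkp⟩
      · have := hmk p (Nat.prime_of_mem_primeFactors h) (Nat.dvd_of_mem_primeFactors h)
        omega
      · exact h
    · intro h
      exact ⟨Or.inr h, hsk p (Nat.prime_of_mem_primeFactors h) (Nat.dvd_of_mem_primeFactors h)⟩
  rw [betaStar, hfilter]
  have hcong : ∀ p ∈ s.primeFactors, p ^ (m * s).factorization p = p ^ s.factorization p := by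
    intro p hp
    have hpm : ¬ p ∣ m := fun hd => absurd (hmk p (Nat.prime_of_mem_primeFactors hp) hd)
      (not_le.mpr (hsk p (Nat.prime_of_mem_primeFactors hp) (Nat.dvd_of_mem_primeFactors hp)))
    rw [Nat.factorization_mul hm hs, Finsupp.add_apply,
      Nat.factorization_eq_zero_of_not_dvd hpm, zero_add]
  rw [Finset.prod_congr rfl hcong, prod_pf s hs]

theorem stmt17 (n k s r : ℕ) (hk : 1 ≤ k) (hs : 1 ≤ s)
    (hcop : ∀ p : ℕ, p.Prime → p ≤ k → ¬ p ∣ s) (hrk : r ≤ k)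
    (hcard : r ≤ ((Finset.Icc 1 n).filter (fun x => betaStar k x = s)).card) :
    (∀ i, 1 ≤ i → i ≤ r →
        i * s ∈ (Finset.Icc 1 n).filter (fun x => betaStar k x = s)) ∧
    (∀ x ∈ (Finset.Icc 1 n).filter (fun x => betaStar k x = s),
        (∀ i, 1 ≤ i → i ≤ r → x ≠ i * s) → r * s < x) ∧
    (∀ i j, 1 ≤ i → i ≤ r → 1 ≤ j → j ≤ r → i ≠ j →
        (GMult n k).Adj (i * s) (j * s)) := by
  have hsk : ∀ p : ℕ, p.Prime → p ∣ s → k < p := by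
    intro p hp hps
    by_contra h
    exact hcop p hp (by omega) hps
  have hXsub : ∀ x ∈ (Finset.Icc 1 n).filter (fun x => betaStar k x = s),
      ∃ c, 1 ≤ c ∧ x = c * s ∧ ∀ p : ℕ, p.Prime → p ∣ c → p ≤ k := by
    intro x hx
    obtain ⟨hxI, hxb⟩ := Finset.mem_filter.mp hx
    obtain ⟨hx1, _⟩ := Finset.mem_Icc.mp hxI
    obtain ⟨c, hc, hck⟩ := exists_decomp k x (by omega)
    rw [hxb] at hc
    refine ⟨c, ?_, hc, hck⟩
    rcases Nat.eq_zero_or_pos c with rfl | h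
    · omega
    · exact h
  have hdivs : ∀ c, (c * s) / s = c := fun c => Nat.mul_div_cancel c (by omega)
  -- r * s ≤ n
  have hrsn : r * s ≤ n := by
    have hle : ((Finset.Icc 1 n).filter (fun x => betaStar k x = s)).card
        ≤ (Finset.Icc 1 (n / s)).card := by
      apply Finset.card_le_card_of_injOn (fun x => x / s)
      · intro x hx
        obtain ⟨c, hc1, hceq, -⟩ := hXsub x hx
        obtain ⟨hxI, -⟩ := Finset.mem_filter.mp hx
        obtain ⟨-, hx2⟩ := Finset.mem_Icc.mp hxI
        rw [Finset.mem_coe, Finset.mem_Icc]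
        constructor
        · simpa [hceq, hdivs] using hc1
        · exact Nat.div_le_div_right hx2
      · intro x hx y hy hxy
        obtain ⟨c, -, hcx, -⟩ := hXsub x hx
        obtain ⟨d, -, hdy, -⟩ := hXsub y hy
        simp only [hcx, hdy, hdivs] at hxy ⊢
        rw [hxy]
    rw [Nat.card_Icc] at hle
    have h2 : r ≤ n / s + 1 - 1 := hcard.trans hle
    exact (Nat.le_div_iff_mul_le (by omega)).mp (by simpa using h2)
  have hmem : ∀ i, 1 ≤ i → i ≤ r →
      i * s ∈ (Finset.Icc 1 n).filter (fun x => betaStar k x = s) := by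
    intro i hi1 hir
    rw [Finset.mem_filter, Finset.mem_Icc]
    refine ⟨⟨Nat.one_le_iff_ne_zero.mpr (by positivity), ?_⟩, ?_⟩
    · calc i * s ≤ r * s := Nat.mul_le_mul_right s hir
        _ ≤ n := hrsn
    · exact betaStar_eq_of k i s (by omega) (by omega)
        (fun p _ hpi => le_trans (Nat.le_of_dvd (by omega) hpi) (by omega)) hsk
  refine ⟨hmem, ?_, ?_⟩
  · intro x hx hne
    obtain ⟨c, hc1, hceq, -⟩ := hXsub x hx
    have hcr : r < c := by
      by_contra h
      exact hne c hc1 (by omega) hceq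
    calc r * s < c * s := (Nat.mul_lt_mul_right (by omega : 0 < s)).mpr hcr
      _ = x := hceq.symm
  · intro i j hi1 hir hj1 hjr hij
    show _ ≠ _ ∧ _
    refine ⟨?_, (Finset.mem_filter.mp (hmem i hi1 hir)).1,
      (Finset.mem_filter.mp (hmem j hj1 hjr)).1, j, i, hj1, by omega, hi1, by omega, by ring⟩
    intro h
    exact hij (Nat.eq_of_mul_eq_mul_right (by omega) h)
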